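/- Let X be a paracompact Hausdorff topological space, Z a topological vector space, and T : X → Set Z a multifunction with nonempty convex values such that every fiber T⁻¹(z) = {x ∈ X : z ∈ T(x)} is open in X. Then T admits a continuous selection: a continuous map g : X → Z with g(x) ∈ T(x) for all x ∈ X. -/

import Mathlib

/-- Browder selection theorem: a multifunction from a paracompact Hausdorff
space into a topological vector space, with nonempty convex values and open
fibers, admits a continuous selection. -/
theorem browder_selection
    {X : Type*} [TopologicalSpace X] [ParacompactSpace X] [T2Space X]
    {Z : Type*} [AddCommGroup Z] [Module ℝ Z] [TopologicalSpace Z]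
    [IsTopologicalAddGroup Z] [ContinuousSMul ℝ Z]
    (T : X → Set Z)
    (hne : ∀ x, (T x).Nonempty)
    (hconv : ∀ x, Convex ℝ (T x))
    (hfib : ∀ z : Z, IsOpen {x : X | z ∈ T x}) :
    ∃ g : X → Z, Continuous g ∧ ∀ x, g x ∈ T x := by
  have : NormalSpace X := inferInstance
  obtain ⟨f, hf⟩ := PartitionOfUnity.exists_isSubordinate (s := (Set.univ : Set X))
    isClosed_univ (fun z : Z => {x : X | z ∈ T x}) hfib
    (fun x _ => Set.mem_iUnion.2 ((hne x).imp fun z hz => hz))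
  refine ⟨fun x => ∑ᶠ z : Z, f z x • z, ?_, fun x => ?_⟩
  · exact f.continuous_finsum_smul fun i x _ => continuousAt_const
  · exact f.finsum_smul_mem_convex (g := fun z _ => z) (Set.mem_univ x)
      (fun i hi => show i ∈ T x from hf i (subset_closure hi)) (hconv x)
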